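/- The space c₀ of real sequences converging to 0, equipped with the supremum norm, is alternatively octahedral. -/
import Mathlib

open scoped ZeroAtInfty

/-- A Banach space `Z` is alternatively octahedral. -/
def AlternativelyOctahedral (Z : Type*) [NormedAddCommGroup Z] : Prop :=
  ∀ (n : ℕ) (x : Fin n → Z), (∀ i, ‖x i‖ = 1) →
    ∀ ε > (0 : ℝ), ∃ y : Z, ‖y‖ = 1 ∧ ∀ i, 2 - ε ≤ max ‖x i + y‖ ‖x i - y‖

/-- `c₀`, the space of real sequences converging to `0` with the sup norm, is
alternatively octahedral. -/
theorem c0_alternativelyOctahedral : AlternativelyOctahedral C₀(ℕ, ℝ) := by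
  intro n x hx ε hε
  -- for each i, pick a coordinate where |x i| is close to 1
  have hk : ∀ i, ∃ m, 1 - ε < |x i m| := by
    intro i
    by_contra h
    push_neg at h
    have hb : ‖(x i).toBCF‖ ≤ max (1 - ε) 0 := by
      apply BoundedContinuousFunction.norm_le (le_max_right _ _) |>.2
      intro m
      exact le_max_of_le_left (by simpa using h m)
    rw [ZeroAtInftyContinuousMap.norm_toBCF_eq_norm, hx i] at hb
    have : max (1 - ε) 0 < 1 := max_lt (by linarith) one_pos
    linarith
  choose k hk using hk
  set S : Finset ℕ := insert 0 (Finset.image k Finset.univ) with hS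
  -- y is the indicator function of S
  set y : C₀(ℕ, ℝ) :=
    ⟨⟨fun m => if m ∈ S then 1 else 0, continuous_of_discreteTopology⟩, by
      rw [Filter.cocompact_eq_cofinite]
      apply Filter.Tendsto.congr' _ tendsto_const_nhds
      filter_upwards [S.finite_toSet.compl_mem_cofinite] with m hm
      simp [Set.mem_compl_iff, Finset.mem_coe] at hm
      simp [hm]⟩ with hy
  have hyval : ∀ m, y m = if m ∈ S then 1 else 0 := fun m => rfl
  have hynorm : ‖y‖ = 1 := by
    rw [← ZeroAtInftyContinuousMap.norm_toBCF_eq_norm]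
    apply le_antisymm
    · apply BoundedContinuousFunction.norm_le zero_le_one |>.2
      intro m
      rw [show (y.toBCF m) = y m from rfl, hyval m]
      split <;> simp
    · have := BoundedContinuousFunction.norm_coe_le_norm y.toBCF 0
      rw [show (y.toBCF 0) = y 0 from rfl, hyval 0] at this
      simpa [hS] using this
  refine ⟨y, hynorm, fun i => ?_⟩
  have hkS : k i ∈ S := by simp [hS]
  have hyk : y (k i) = 1 := by rw [hyval, if_pos hkS]
  rcases le_or_gt 0 (x i (k i)) with hpos | hneg
  · -- x i (k i) ≥ 0 : use ‖x i + y‖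
    refine le_max_of_le_left ?_
    have h1 := BoundedContinuousFunction.norm_coe_le_norm (x i + y).toBCF (k i)
    rw [ZeroAtInftyContinuousMap.norm_toBCF_eq_norm] at h1
    rw [show ((x i + y).toBCF (k i)) = (x i + y) (k i) from rfl] at h1
    have h2 : (x i + y) (k i) = x i (k i) + 1 := by
      rw [ZeroAtInftyContinuousMap.coe_add]; simp [hyk]
    rw [h2] at h1
    have habs : |x i (k i)| = x i (k i) := abs_of_nonneg hpos
    have := hk i
    rw [habs] at this
    have : (2 : ℝ) - ε ≤ ‖x i (k i) + 1‖ := by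
      rw [Real.norm_eq_abs, abs_of_nonneg (by linarith)]
      linarith
    linarith
  · -- x i (k i) < 0 : use ‖x i - y‖
    refine le_max_of_le_right ?_
    have h1 := BoundedContinuousFunction.norm_coe_le_norm (x i - y).toBCF (k i)
    rw [ZeroAtInftyContinuousMap.norm_toBCF_eq_norm] at h1
    rw [show ((x i - y).toBCF (k i)) = (x i - y) (k i) from rfl] at h1
    have h2 : (x i - y) (k i) = x i (k i) - 1 := by
      rw [ZeroAtInftyContinuousMap.coe_sub]; simp [hyk]
    rw [h2] at h1
    have habs : |x i (k i)| = -(x i (k i)) := abs_of_neg hneg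
    have := hk i
    rw [habs] at this
    have : (2 : ℝ) - ε ≤ ‖x i (k i) - 1‖ := by
      rw [Real.norm_eq_abs, abs_of_neg (by linarith)]
      linarith
    linarith
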